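/- Let n ≥ 2, r0 > 0, 0 < β ≤ 2, and C1, C2 ≥ 0. Let u ∈ C²((r0,∞)) satisfy |u''(r) + (n−1)·β·r^{β−1}·u'(r)| ≤ C1 r^{2β−2} |u(r)| + C2 r^{β−1} |u'(r)| for all r > r0. If for every τ > 0 there is a constant C_τ such that |u(r)| ≤ C_τ e^{−τ r^β} for all r > r0, then u ≡ 0 on (r0+1, ∞). -/

import Mathlib

open MeasureTheory Filter Real Set Asymptotics

set_option maxHeartbeats 2000000
open Topology

lemma aux_deriv_bound (r0 β C1 D : ℝ) (hr0 : 0 < r0) (hβ0 : 0 < β) (hβ2 : β ≤ 2)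
    (hC1 : 0 ≤ C1) (hD : 0 < D) (u : ℝ → ℝ)
    (hud : ∀ x ∈ Ioi r0, HasDerivAt u (deriv u x) x)
    (hvd : ∀ x ∈ Ioi r0, HasDerivAt (deriv u) (deriv (deriv u) x) x)
    (hode : ∀ x ∈ Ioi r0, |deriv (deriv u) x| ≤
      D * x ^ (β - 1) * |deriv u x| + C1 * x ^ (2 * β - 2) * |u x|)
    (τ Cτ : ℝ) (hτ : 0 < τ) (hCτ : 0 ≤ Cτ)
    (hu_decay : ∀ r ∈ Ioi r0, |u r| ≤ Cτ * Real.exp (-τ * r ^ β)) :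
    ∀ r, max 2 (r0 + 2) ≤ r →
      |deriv u r| ≤ (Cτ * Real.exp (2 * τ + D) * (2 + C1 / D)) * (1 + r) * Real.exp (-τ * r ^ β) := by
  intro r hr
  have hr2 : (2 : ℝ) ≤ r := le_trans (le_max_left _ _) hr
  have hrr0 : r0 + 2 ≤ r := le_trans (le_max_right _ _) hr
  obtain ⟨h, hh⟩ : ∃ h : ℝ, h = 1 / (1 + r) := ⟨_, rfl⟩
  have h1r : (0:ℝ) < 1 + r := by linarith
  have hhpos : 0 < h := by rw [hh]; positivity
  have hh1 : h ≤ 1 := by rw [hh, div_le_one h1r]; linarith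
  have hrh : r * h ≤ 1 := by rw [hh, mul_one_div, div_le_one h1r]; linarith
  have h1rh : (1 + r) * h = 1 := by rw [hh]; field_simp
  have hsub : Icc (r - h) r ⊆ Ioi r0 := by
    intro x hx; have := hx.1; simp only [mem_Ioi]; nlinarith
  have hx1 : ∀ x ∈ Icc (r - h) r, (1:ℝ) ≤ x := by intro x hx; nlinarith [hx.1]
  -- bound on |u| on the interval
  obtain ⟨m, hm⟩ : ∃ m : ℝ, m = Cτ * Real.exp (-τ * (r - h) ^ β) := ⟨_, rfl⟩
  have hmpos : 0 ≤ m := by rw [hm]; positivity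
  have hum : ∀ x ∈ Icc (r - h) r, |u x| ≤ m := by
    intro x hx
    refine le_trans (hu_decay x (hsub hx)) ?_
    rw [hm]
    have h1 : (r - h) ^ β ≤ x ^ β := Real.rpow_le_rpow (by nlinarith [hx.1]) hx.1 hβ0.le
    have h2 : Real.exp (-τ * x ^ β) ≤ Real.exp (-τ * (r - h) ^ β) :=
      Real.exp_le_exp.2 (by nlinarith)
    exact mul_le_mul_of_nonneg_left h2 hCτ
  -- m is controlled by exp(-τ r^β) up to e^{2τ}
  have hrh1 : (1:ℝ) ≤ r - h := by nlinarith
  have hmb : m ≤ Cτ * Real.exp (2 * τ) * Real.exp (-τ * r ^ β) := by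
    have hmvt : ∃ c ∈ Ioo (r - h) r, β * c ^ (β - 1) = (r ^ β - (r - h) ^ β) / (r - (r - h)) := by
      apply exists_hasDerivAt_eq_slope (fun x => x ^ β) (fun x => β * x ^ (β - 1))
        (by linarith)
      · intro x hx
        have hx0 : x ≠ 0 := by have := hx.1; nlinarith
        exact ((Real.hasDerivAt_rpow_const (p := β) (Or.inl hx0)).continuousAt).continuousWithinAt
      · intro x hx
        have hx0 : x ≠ 0 := by have := hx.1; nlinarith
        simpa [mul_comm] using Real.hasDerivAt_rpow_const (p := β) (Or.inl hx0)
    obtain ⟨c, hc, hceq⟩ := hmvt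
    have hc1 : (1:ℝ) ≤ c := by nlinarith [hc.1]
    have hcb : c ^ (β - 1) ≤ r := by
      calc c ^ (β - 1) ≤ c ^ (1:ℝ) :=
        Real.rpow_le_rpow_of_exponent_le hc1 (by linarith)
      _ = c := Real.rpow_one c
      _ ≤ r := hc.2.le
    have hcp : 0 ≤ c ^ (β - 1) := Real.rpow_nonneg (by linarith) _
    have hdiff : r ^ β - (r - h) ^ β ≤ 2 := by
      have heq : r ^ β - (r - h) ^ β = β * c ^ (β - 1) * h := by
        have hh' : r - (r - h) = h := by ring
        rw [hh', eq_div_iff hhpos.ne'] at hceq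
        linarith [hceq]
      rw [heq]
      have h2a : β * c ^ (β - 1) ≤ 2 * r := mul_le_mul hβ2 hcb hcp (by norm_num)
      have h2 : β * c ^ (β - 1) * h ≤ 2 * (r * h) := by
        nlinarith [mul_le_mul_of_nonneg_right h2a hhpos.le]
      linarith
    have h3 : Real.exp (-τ * (r - h) ^ β) ≤ Real.exp (2 * τ) * Real.exp (-τ * r ^ β) := by
      rw [← Real.exp_add]
      exact Real.exp_le_exp.2 (by nlinarith)
    calc m = Cτ * Real.exp (-τ * (r - h) ^ β) := hm
    _ ≤ Cτ * (Real.exp (2 * τ) * Real.exp (-τ * r ^ β)) := mul_le_mul_of_nonneg_left h3 hCτ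
    _ = Cτ * Real.exp (2 * τ) * Real.exp (-τ * r ^ β) := by ring
  -- MVT to find a point with controlled derivative
  have hcont : ContinuousOn u (Icc (r - h) r) := fun x hx =>
    ((hud x (hsub hx)).continuousAt).continuousWithinAt
  obtain ⟨ξ, hξ, hξeq⟩ := exists_hasDerivAt_eq_slope u (deriv u)
    (show r - h < r by linarith) hcont
    (fun x hx => hud x (hsub ⟨hx.1.le, hx.2.le⟩))
  have hξb : |deriv u ξ| ≤ 2 * m * (1 + r) := by
    rw [hξeq]
    have hden : r - (r - h) = h := by ring
    rw [hden, abs_div, abs_of_pos hhpos, div_le_iff₀ hhpos]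
    have h1 := hum r ⟨by linarith, le_refl r⟩
    have h2 := hum (r - h) ⟨le_refl _, by linarith⟩
    have h3 : |u r - u (r - h)| ≤ |u r| + |u (r - h)| := abs_sub _ _
    nlinarith
  -- Grönwall estimate on [ξ, r]
  obtain ⟨Kb, hKbdef⟩ : ∃ k : ℝ, k = D * (1 + r) := ⟨_, rfl⟩
  have hKb : 0 < Kb := by rw [hKbdef]; positivity
  obtain ⟨ε, hεdef⟩ : ∃ e : ℝ, e = C1 * (r * r) * m := ⟨_, rfl⟩
  have hε : 0 ≤ ε := by rw [hεdef]; positivity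
  have hsub2 : Icc ξ r ⊆ Icc (r - h) r := fun x hx => ⟨le_trans hξ.1.le hx.1, hx.2⟩
  have hgron : ∀ t ∈ Icc ξ r, ‖deriv u t‖ ≤ gronwallBound (|deriv u ξ|) Kb ε (t - ξ) := by
    apply norm_le_gronwallBound_of_norm_deriv_right_le
    · exact fun x hx => ((hvd x (hsub (hsub2 hx))).continuousAt).continuousWithinAt
    · exact fun x hx => (hvd x (hsub (hsub2 ⟨hx.1, hx.2.le⟩))).hasDerivWithinAt
    · simp [Real.norm_eq_abs]
    · intro x hx
      have hxm : x ∈ Icc (r - h) r := hsub2 ⟨hx.1, hx.2.le⟩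
      have hxIoi : x ∈ Ioi r0 := hsub hxm
      have hx1' : (1:ℝ) ≤ x := hx1 x hxm
      have hb1 : x ^ (β - 1) ≤ 1 + r := by
        calc x ^ (β - 1) ≤ x ^ (1:ℝ) :=
          Real.rpow_le_rpow_of_exponent_le hx1' (by linarith)
        _ = x := Real.rpow_one x
        _ ≤ 1 + r := by linarith [hxm.2]
      have hb2 : x ^ (2 * β - 2) ≤ r * r := by
        calc x ^ (2 * β - 2) ≤ x ^ (2:ℝ) :=
          Real.rpow_le_rpow_of_exponent_le hx1' (by linarith)
        _ = x * x := by
          rw [show (2:ℝ) = ((2:ℕ):ℝ) by norm_num, Real.rpow_natCast]; ring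
        _ ≤ r * r := by nlinarith [hxm.2]
      have hmx := hum x hxm
      have := hode x hxIoi
      rw [Real.norm_eq_abs, Real.norm_eq_abs]
      have hp1 : D * x ^ (β - 1) * |deriv u x| ≤ Kb * |deriv u x| := by
        rw [hKbdef]
        have := abs_nonneg (deriv u x)
        nlinarith [mul_le_mul_of_nonneg_right hb1 (abs_nonneg (deriv u x))]
      have hp2 : C1 * x ^ (2 * β - 2) * |u x| ≤ ε := by
        rw [hεdef]
        have hxp : 0 ≤ x ^ (2 * β - 2) := Real.rpow_nonneg (by linarith) _
        have h5 : x ^ (2 * β - 2) * |u x| ≤ (r * r) * m := by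
          apply mul_le_mul hb2 hmx (abs_nonneg _) (by nlinarith)
        nlinarith
      linarith
  have hfin := hgron r ⟨hξ.2.le, le_refl r⟩
  rw [Real.norm_eq_abs] at hfin
  -- estimate the Grönwall bound
  have ht0 : 0 ≤ r - ξ := by linarith [hξ.2.le]
  have hth : r - ξ ≤ h := by linarith [hξ.1.le]
  have hKt : Kb * (r - ξ) ≤ D := by
    calc Kb * (r - ξ) ≤ Kb * h := mul_le_mul_of_nonneg_left hth hKb.le
    _ = D * ((1 + r) * h) := by rw [hKbdef]; ring
    _ = D := by rw [h1rh]; ring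
  have hexpKt : Real.exp (Kb * (r - ξ)) ≤ Real.exp D := Real.exp_le_exp.2 hKt
  have hgb : gronwallBound (|deriv u ξ|) Kb ε (r - ξ) ≤
      (2 * m * (1 + r)) * Real.exp D + ε / Kb * Real.exp D := by
    rw [gronwallBound_of_K_ne_0 hKb.ne']
    have e1 : |deriv u ξ| * Real.exp (Kb * (r - ξ)) ≤ (2 * m * (1 + r)) * Real.exp D := by
      apply mul_le_mul hξb hexpKt (Real.exp_nonneg _) (by positivity)
    have e2 : ε / Kb * (Real.exp (Kb * (r - ξ)) - 1) ≤ ε / Kb * Real.exp D := by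
      apply mul_le_mul_of_nonneg_left (by linarith [Real.exp_nonneg (Kb * (r - ξ))]) (by positivity)
    linarith
  have hεK : ε / Kb ≤ C1 / D * m * (1 + r) := by
    rw [hεdef, hKbdef, div_le_iff₀ (by positivity)]
    have hrr : r * r ≤ (1 + r) * (1 + r) := by nlinarith
    have h0 : 0 ≤ C1 * m := mul_nonneg hC1 hmpos
    calc C1 * (r * r) * m = C1 * m * (r * r) := by ring
    _ ≤ C1 * m * ((1 + r) * (1 + r)) := mul_le_mul_of_nonneg_left hrr h0
    _ = C1 / D * m * (1 + r) * (D * (1 + r)) := by field_simp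
  have hfinal : |deriv u r| ≤ (2 + C1 / D) * m * (1 + r) * Real.exp D := by
    have := le_trans hfin hgb
    have e3 : ε / Kb * Real.exp D ≤ C1 / D * m * (1 + r) * Real.exp D :=
      mul_le_mul_of_nonneg_right hεK (Real.exp_nonneg _)
    nlinarith [Real.exp_nonneg D]
  calc |deriv u r| ≤ (2 + C1 / D) * m * (1 + r) * Real.exp D := hfinal
  _ ≤ (2 + C1 / D) * (Cτ * Real.exp (2 * τ) * Real.exp (-τ * r ^ β)) * (1 + r) * Real.exp D := by
      have h2C : (0:ℝ) ≤ 2 + C1 / D := by positivity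
      have h4 := mul_le_mul_of_nonneg_right (mul_le_mul_of_nonneg_left hmb h2C)
        (show (0:ℝ) ≤ (1 + r) * Real.exp D by positivity)
      nlinarith [h4]
  _ = (Cτ * Real.exp (2 * τ + D) * (2 + C1 / D)) * (1 + r) * Real.exp (-τ * r ^ β) := by
      rw [Real.exp_add]; ring


lemma aux_energy (r0 β C1 C2 : ℝ) (n : ℕ) (hn : 2 ≤ n) (hβ0 : 0 < β) (hβ2 : β ≤ 2)
    (hC1 : 0 ≤ C1) (hC2 : 0 ≤ C2) (u : ℝ → ℝ)
    (hud : ∀ x ∈ Ioi r0, HasDerivAt u (deriv u x) x)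
    (hvd : ∀ x ∈ Ioi r0, HasDerivAt (deriv u) (deriv (deriv u) x) x)
    (hineq : ∀ r ∈ Ioi r0,
      |deriv (deriv u) r + ((n : ℝ) - 1) * β * r ^ (β - 1) * deriv u r| ≤
        C1 * r ^ (2 * β - 2) * |u r| + C2 * r ^ (β - 1) * |deriv u r|)
    (K : ℝ) (hK : K = 1 + 2 * ((n:ℝ) - 1) + C1 / β ^ 2 + 2 * (C2 / β) + 2 * |β - 1| / β)
    (x : ℝ) (hxr0 : r0 < x) (hx1 : 1 < x) :
    ∃ g : ℝ, 0 ≤ g ∧ HasDerivAt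
      (fun r => ((u r) ^ 2 + (deriv u r / (β * r ^ (β - 1))) ^ 2) * Real.exp (K * r ^ β)) g x := by
  have hx0 : (0:ℝ) < x := by linarith
  have hn1 : (1:ℝ) ≤ (n:ℝ) - 1 := by
    have : (2:ℝ) ≤ (n:ℝ) := by exact_mod_cast hn
    linarith
  -- abbreviations
  obtain ⟨P, hPdef⟩ : ∃ p : ℝ, p = β * x ^ (β - 1) := ⟨_, rfl⟩
  have hP : 0 < P := by rw [hPdef]; positivity
  obtain ⟨U, hU⟩ : ∃ y : ℝ, y = u x := ⟨_, rfl⟩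
  obtain ⟨V, hV⟩ : ∃ y : ℝ, y = deriv u x := ⟨_, rfl⟩
  obtain ⟨A, hA⟩ : ∃ y : ℝ, y = deriv (deriv u) x := ⟨_, rfl⟩
  obtain ⟨W, hW⟩ : ∃ y : ℝ, y = V / P := ⟨_, rfl⟩
  have hVW : V = P * W := by rw [hW]; field_simp
  obtain ⟨s, hs⟩ : ∃ y : ℝ, y = (β - 1) / x := ⟨_, rfl⟩
  obtain ⟨e, he⟩ : ∃ y : ℝ, y = A + ((n:ℝ) - 1) * P * V := ⟨_, rfl⟩
  obtain ⟨q, hq⟩ : ∃ y : ℝ, y = e / P := ⟨_, rfl⟩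
  obtain ⟨c1, hc1⟩ : ∃ y : ℝ, y = C1 / β ^ 2 := ⟨_, rfl⟩
  obtain ⟨c2, hc2⟩ : ∃ y : ℝ, y = C2 / β := ⟨_, rfl⟩
  obtain ⟨c3, hc3⟩ : ∃ y : ℝ, y = |β - 1| / β := ⟨_, rfl⟩
  have hc1n : 0 ≤ c1 := by rw [hc1]; positivity
  have hc2n : 0 ≤ c2 := by rw [hc2]; positivity
  have hc3n : 0 ≤ c3 := by rw [hc3]; positivity
  have hK' : K = 1 + 2 * ((n:ℝ) - 1) + c1 + 2 * c2 + 2 * c3 := by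
    rw [hK, hc1, hc2, hc3]; ring
  -- derivative structure
  have hPd : HasDerivAt (fun r : ℝ => β * r ^ (β - 1)) (P * s) x := by
    have h1 := (Real.hasDerivAt_rpow_const (x := x) (p := β - 1) (Or.inl hx0.ne')).const_mul β
    refine h1.congr_deriv ?_
    rw [hPdef, hs]
    have hxs : x ^ (β - 1 - 1) = x ^ (β - 1) / x := by
      rw [Real.rpow_sub hx0, Real.rpow_one]
    rw [hxs]; field_simp
  have hwd : HasDerivAt (fun r => deriv u r / (β * r ^ (β - 1)))
      ((A * P - V * (P * s)) / P ^ 2) x := by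
    have := (hvd x (by exact hxr0)).div hPd (by rw [← hPdef]; exact hP.ne')
    rw [← hA, ← hV, ← hPdef] at this
    exact this
  have hu2 : HasDerivAt (fun r => (u r) ^ 2) (2 * U * V) x := by
    have := (hud x (by exact hxr0)).pow 2
    rw [← hU, ← hV] at this
    refine this.congr_deriv ?_; push_cast; ring
  have hw2 : HasDerivAt (fun r => (deriv u r / (β * r ^ (β - 1))) ^ 2)
      (2 * W * ((A * P - V * (P * s)) / P ^ 2)) x := by
    have := hwd.pow 2
    refine this.congr_deriv ?_
    rw [hW, hV, hPdef]
    try push_cast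
    try ring
  have hE : HasDerivAt (fun r => (u r) ^ 2 + (deriv u r / (β * r ^ (β - 1))) ^ 2)
      (2 * U * V + 2 * W * ((A * P - V * (P * s)) / P ^ 2)) x := hu2.add hw2
  have hφ : HasDerivAt (fun r : ℝ => Real.exp (K * r ^ β)) (Real.exp (K * x ^ β) * (K * P)) x := by
    have h1 := ((Real.hasDerivAt_rpow_const (x := x) (p := β) (Or.inl hx0.ne')).const_mul K).exp
    convert h1 using 1
    rw [hPdef]
  have hF := hE.mul hφ
  refine ⟨_, ?_, hF⟩
  -- positivity of the derivative
  have hEx : (u x) ^ 2 + (deriv u x / (β * x ^ (β - 1))) ^ 2 = U ^ 2 + W ^ 2 := by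
    rw [hU, hW, hV, hPdef]
  rw [hEx]
  have hkey : 0 ≤ (2 * U * V + 2 * W * ((A * P - V * (P * s)) / P ^ 2)) + K * P * (U ^ 2 + W ^ 2) := by
    -- rewrite the derivative of the energy
    have hid : 2 * U * V + 2 * W * ((A * P - V * (P * s)) / P ^ 2) =
        2 * U * (P * W) - 2 * ((n:ℝ) - 1) * P * W ^ 2 + 2 * W * q - 2 * s * W ^ 2 := by
      rw [hq, he, hVW]
      field_simp
      ring
    rw [hid]
    -- the bound on q
    have habs : |e| ≤ c1 * P ^ 2 * |U| + c2 * P ^ 2 * |W| := by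
      have h0 := hineq x (by exact hxr0)
      rw [← hA, ← hV, ← hU] at h0
      have h1 : A + ((n:ℝ) - 1) * β * x ^ (β - 1) * V = e := by rw [he, hPdef]; ring
      rw [h1] at h0
      have hx2b : x ^ (2 * β - 2) = P ^ 2 / β ^ 2 := by
        rw [hPdef]
        rw [show (2 : ℝ) * β - 2 = (β - 1) * 2 by ring]
        rw [Real.rpow_mul hx0.le]
        rw [show ((2:ℝ)) = ((2:ℕ):ℝ) by norm_num, Real.rpow_natCast]
        field_simp
      have hxb : C2 * x ^ (β - 1) * |V| = C2 / β * P ^ 2 * |W| := by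
        rw [hVW, abs_mul, abs_of_pos hP, hPdef]
        field_simp
      rw [hx2b, hxb] at h0
      calc |e| ≤ C1 * (P ^ 2 / β ^ 2) * |U| + C2 / β * P ^ 2 * |W| := h0
      _ = c1 * P ^ 2 * |U| + c2 * P ^ 2 * |W| := by rw [hc1, hc2]; ring
    have hqb : |q| ≤ c1 * P * |U| + c2 * P * |W| := by
      rw [hq, abs_div, abs_of_pos hP, div_le_iff₀ hP]
      calc |e| ≤ c1 * P ^ 2 * |U| + c2 * P ^ 2 * |W| := habs
      _ = (c1 * P * |U| + c2 * P * |W|) * P := by ring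
    have hsb : |s| ≤ c3 * P := by
      rw [hc3]
      rw [hs, abs_div, abs_of_pos hx0, div_le_iff₀ hx0]
      have hxβ : (1:ℝ) ≤ x ^ β := Real.one_le_rpow hx1.le hβ0.le
      have hPx : P * x = β * x ^ β := by
        rw [hPdef]
        have : x ^ (β - 1) * x = x ^ β := by
          nth_rewrite 2 [show x = x ^ (1:ℝ) by rw [Real.rpow_one]]
          rw [← Real.rpow_add hx0]; ring_nf
        nlinarith [this]
      have h2 : |β - 1| * 1 ≤ |β - 1| * x ^ β := by
        apply mul_le_mul_of_nonneg_left hxβ (abs_nonneg _)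
      calc |β - 1| = |β - 1| * 1 := by ring
      _ ≤ |β - 1| * x ^ β := h2
      _ = |β - 1| / β * (β * x ^ β) := by field_simp
      _ = |β - 1| / β * (P * x) := by rw [hPx]
      _ = |β - 1| / β * P * x := by ring
    -- termwise bounds
    have T1 : -(P * (U ^ 2 + W ^ 2)) ≤ 2 * U * (P * W) := by
      nlinarith only [mul_nonneg hP.le (sq_nonneg (U + W))]
    have T2 : -(2 * ((n:ℝ) - 1) * P * (U ^ 2 + W ^ 2)) ≤ -(2 * ((n:ℝ) - 1) * P * W ^ 2) := by
      nlinarith only [mul_nonneg (mul_nonneg (by linarith : (0:ℝ) ≤ (n:ℝ) - 1) hP.le) (sq_nonneg U)]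
    have T3 : -((c1 + 2 * c2) * P * (U ^ 2 + W ^ 2)) ≤ 2 * W * q := by
      have t3a : 2 * |W| * |q| ≤ 2 * |W| * (c1 * P * |U| + c2 * P * |W|) :=
        mul_le_mul_of_nonneg_left hqb (by positivity)
      have t3b : 2 * |W| * (c1 * P * |U| + c2 * P * |W|) ≤
          c1 * P * (U ^ 2 + W ^ 2) + 2 * c2 * P * W ^ 2 := by
        have e1 : c1 * (P * |U| ^ 2) = c1 * (P * U ^ 2) := by rw [sq_abs]
        have e2 : c1 * (P * |W| ^ 2) = c1 * (P * W ^ 2) := by rw [sq_abs]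
        have e3 : c2 * (P * |W| ^ 2) = c2 * (P * W ^ 2) := by rw [sq_abs]
        nlinarith only [mul_nonneg (mul_nonneg hc1n hP.le) (sq_nonneg (|U| - |W|)), e1, e2, e3,
          mul_nonneg (mul_nonneg hc2n hP.le) (sq_nonneg W), sq_abs W, sq_abs U]
      have t3c : -(2 * |W| * |q|) ≤ 2 * W * q := by
        have h1 : -|W * q| ≤ W * q := neg_abs_le _
        have h2 : |W * q| = |W| * |q| := abs_mul _ _
        linarith
      linarith only [t3a, t3b, t3c,
        mul_nonneg (mul_nonneg hc2n hP.le) (sq_nonneg U)]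
    have T4 : -(2 * c3 * P * W ^ 2) ≤ -(2 * s * W ^ 2) := by
      have h1 : s * W ^ 2 ≤ |s| * W ^ 2 := mul_le_mul_of_nonneg_right (le_abs_self s) (sq_nonneg W)
      have h2 : |s| * W ^ 2 ≤ c3 * P * W ^ 2 :=
        mul_le_mul_of_nonneg_right hsb (sq_nonneg W)
      linarith
    rw [hK']
    linarith only [T1, T2, T3, T4,
      mul_nonneg (mul_nonneg hc3n hP.le) (sq_nonneg U)]
  have hexp : 0 ≤ Real.exp (K * x ^ β) := (Real.exp_pos _).le
  linarith only [mul_nonneg hkey hexp]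

/-- The one-dimensional (radial) case of Corollary 6.4 b) of the paper, on warped
cylindrical ends with warping function σ(r) = e^{r^β}, 0 < β ≤ 2: the radial Laplacian
is L u = u'' + (n−1)·β·r^{β−1}·u'. -/
theorem stmt_13
    (n : ℕ) (hn : 2 ≤ n) (r0 : ℝ) (hr0 : 0 < r0)
    (β : ℝ) (hβ0 : 0 < β) (hβ2 : β ≤ 2) (C1 C2 : ℝ) (hC1 : 0 ≤ C1) (hC2 : 0 ≤ C2)
    (u : ℝ → ℝ) (hu : ContDiffOn ℝ 2 u (Ioi r0))
    (hineq : ∀ r ∈ Ioi r0,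
      |deriv (deriv u) r + ((n : ℝ) - 1) * β * r ^ (β - 1) * deriv u r| ≤
        C1 * r ^ (2 * β - 2) * |u r| + C2 * r ^ (β - 1) * |deriv u r|)
    (hdecay : ∀ τ > (0 : ℝ), ∃ Cτ : ℝ, ∀ r ∈ Ioi r0,
      |u r| ≤ Cτ * Real.exp (-τ * r ^ β)) :
    ∀ r, r0 + 1 < r → u r = 0 := by
  have hop : IsOpen (Ioi r0) := isOpen_Ioi
  have hn1 : (1:ℝ) ≤ (n:ℝ) - 1 := by
    have : (2:ℝ) ≤ (n:ℝ) := by exact_mod_cast hn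
    linarith
  have hud : ∀ x ∈ Ioi r0, HasDerivAt u (deriv u x) x := by
    intro x hx
    exact ((hu.differentiableOn (by norm_num)).differentiableAt (hop.mem_nhds hx)).hasDerivAt
  have hu1 : ContDiffOn ℝ 1 (deriv u) (Ioi r0) := hu.deriv_of_isOpen hop (by norm_num)
  have hvd : ∀ x ∈ Ioi r0, HasDerivAt (deriv u) (deriv (deriv u) x) x := by
    intro x hx
    exact ((hu1.differentiableOn (by norm_num)).differentiableAt (hop.mem_nhds hx)).hasDerivAt
  -- constants
  obtain ⟨D, hDdef⟩ : ∃ y : ℝ, y = ((n:ℝ) - 1) * β + C2 := ⟨_, rfl⟩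
  have hD : 0 < D := by rw [hDdef]; nlinarith
  obtain ⟨K, hKdef⟩ : ∃ y : ℝ,
      y = 1 + 2 * ((n:ℝ) - 1) + C1 / β ^ 2 + 2 * (C2 / β) + 2 * |β - 1| / β := ⟨_, rfl⟩
  have hKpos : 0 < K := by
    rw [hKdef]
    have h1 : 0 ≤ C1 / β ^ 2 := by positivity
    have h2 : 0 ≤ C2 / β := by positivity
    have h3 : 0 ≤ 2 * |β - 1| / β := by positivity
    linarith
  -- the ODE bound in one-sided form
  have hode : ∀ x ∈ Ioi r0, |deriv (deriv u) x| ≤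
      D * x ^ (β - 1) * |deriv u x| + C1 * x ^ (2 * β - 2) * |u x| := by
    intro x hx
    have h1 := hineq x hx
    have hxpos : (0:ℝ) < x := lt_trans hr0 hx
    have hxp : 0 < x ^ (β - 1) := Real.rpow_pos_of_pos hxpos _
    have h2 : |deriv (deriv u) x| ≤
        |deriv (deriv u) x + ((n:ℝ) - 1) * β * x ^ (β - 1) * deriv u x| +
          |((n:ℝ) - 1) * β * x ^ (β - 1) * deriv u x| := by
      have hid : deriv (deriv u) x =
          (deriv (deriv u) x + ((n:ℝ) - 1) * β * x ^ (β - 1) * deriv u x) -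
            ((n:ℝ) - 1) * β * x ^ (β - 1) * deriv u x := by ring
      nth_rewrite 1 [hid]
      exact abs_sub _ _
    have h3 : |((n:ℝ) - 1) * β * x ^ (β - 1) * deriv u x| =
        ((n:ℝ) - 1) * β * x ^ (β - 1) * |deriv u x| := by
      rw [abs_mul, abs_of_nonneg (by positivity : (0:ℝ) ≤ ((n:ℝ) - 1) * β * x ^ (β - 1))]
    have h4 : D * x ^ (β - 1) * |deriv u x| =
        ((n:ℝ) - 1) * β * x ^ (β - 1) * |deriv u x| + C2 * x ^ (β - 1) * |deriv u x| := by
      rw [hDdef]; ring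
    linarith
  -- decay of u with rate K
  obtain ⟨CK, hCK⟩ := hdecay K hKpos
  obtain ⟨CK', hCK'def⟩ : ∃ y : ℝ, y = max CK 0 := ⟨_, rfl⟩
  have hCK'0 : 0 ≤ CK' := by rw [hCK'def]; exact le_max_right _ _
  have hdecayK : ∀ r ∈ Ioi r0, |u r| ≤ CK' * Real.exp (-K * r ^ β) := by
    intro r hr
    refine le_trans (hCK r hr) ?_
    rw [hCK'def]
    exact mul_le_mul_of_nonneg_right (le_max_left _ _) (Real.exp_pos _).le
  -- derivative decay with rate K
  obtain ⟨C', hC'def⟩ : ∃ y : ℝ, y = CK' * Real.exp (2 * K + D) * (2 + C1 / D) := ⟨_, rfl⟩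
  have hC'0 : 0 ≤ C' := by rw [hC'def]; positivity
  have hvdecay : ∀ r, max 2 (r0 + 2) ≤ r →
      |deriv u r| ≤ C' * (1 + r) * Real.exp (-K * r ^ β) := by
    intro r hr
    rw [hC'def]
    exact aux_deriv_bound r0 β C1 D hr0 hβ0 hβ2 hC1 hD u hud hvd hode K CK' hKpos hCK'0 hdecayK r hr
  -- contradiction setup
  by_contra hcon
  push_neg at hcon
  obtain ⟨rs, hrs, hurs⟩ := hcon
  have hrs1 : (1:ℝ) < rs := by linarith
  obtain ⟨F, hFdef⟩ : ∃ F : ℝ → ℝ, F = fun r =>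
      ((u r) ^ 2 + (deriv u r / (β * r ^ (β - 1))) ^ 2) * Real.exp (K * r ^ β) := ⟨_, rfl⟩
  have haux : ∀ x, rs ≤ x → ∃ g : ℝ, 0 ≤ g ∧ HasDerivAt F g x := by
    intro x hx
    obtain ⟨g, hg0, hg⟩ := aux_energy r0 β C1 C2 n hn hβ0 hβ2 hC1 hC2 u hud hvd hineq K
      (by rw [hKdef]) x (by linarith) (by linarith)
    exact ⟨g, hg0, by rw [hFdef]; exact hg⟩
  have hmono : MonotoneOn F (Ici rs) := by
    apply monotoneOn_of_deriv_nonneg (convex_Ici rs)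
    · intro x hx
      obtain ⟨g, _, hg⟩ := haux x hx
      exact hg.continuousAt.continuousWithinAt
    · rw [interior_Ici]
      intro x hx
      obtain ⟨g, _, hg⟩ := haux x (le_of_lt hx)
      exact hg.differentiableAt.differentiableWithinAt
    · rw [interior_Ici]
      intro x hx
      obtain ⟨g, hg0, hg⟩ := haux x (le_of_lt hx)
      rw [hg.deriv]
      exact hg0
  have hFrs : 0 < F rs := by
    rw [hFdef]
    have h1 : 0 < (u rs) ^ 2 := lt_of_le_of_ne (sq_nonneg _) (Ne.symm (pow_ne_zero 2 hurs))
    have h2 := sq_nonneg (deriv u rs / (β * rs ^ (β - 1)))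
    have h3 := Real.exp_pos (K * rs ^ β)
    positivity
  -- upper bound on F for large r
  obtain ⟨M, hMdef⟩ : ∃ y : ℝ, y = CK' ^ 2 + (C' / β) ^ 2 := ⟨_, rfl⟩
  have hM0 : 0 ≤ M := by rw [hMdef]; positivity
  have hub : ∀ r, max (max 2 (r0 + 2)) rs ≤ r →
      F r ≤ M * (1 + r) ^ 4 * Real.exp (-K * r ^ β) := by
    intro r hr
    have hr2 : (2:ℝ) ≤ r := le_trans (le_max_left _ _) (le_trans (le_max_left _ _) hr)
    have hrr0 : r0 + 2 ≤ r := le_trans (le_max_right _ _) (le_trans (le_max_left _ _) hr)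
    have hr1 : (1:ℝ) ≤ r := by linarith
    have hrIoi : r ∈ Ioi r0 := by simp only [mem_Ioi]; linarith
    have hrpos : (0:ℝ) < r := by linarith
    have hPpos : (0:ℝ) < β * r ^ (β - 1) := by positivity
    have hrβ1 : (1:ℝ) ≤ r ^ β := Real.one_le_rpow hr1 hβ0.le
    -- bound on w = V / P
    have hVb := hvdecay r (le_trans (le_max_left _ _) hr)
    have hwb : |deriv u r / (β * r ^ (β - 1))| ≤ |deriv u r| * r / β := by
      rw [abs_div, abs_of_pos hPpos, div_le_iff₀ hPpos]
      have hrid : r * (β * r ^ (β - 1)) = β * r ^ β := by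
        have : r ^ (β - 1) * r = r ^ β := by
          nth_rewrite 2 [show r = r ^ (1:ℝ) by rw [Real.rpow_one]]
          rw [← Real.rpow_add hrpos]; ring_nf
        nlinarith [this]
      have h5 : |deriv u r| * r / β * (β * r ^ (β - 1)) = |deriv u r| * (r ^ β) := by
        field_simp
        linear_combination |deriv u r| * (mul_left_cancel₀ hβ0.ne' (by linarith [hrid]) : r * r ^ (β - 1) = r ^ β)
      rw [h5]
      nlinarith [mul_le_mul_of_nonneg_left hrβ1 (abs_nonneg (deriv u r))]
    have hwfull : |deriv u r / (β * r ^ (β - 1))| ≤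
        (C' / β) * (1 + r) ^ 2 * Real.exp (-K * r ^ β) := by
      have hmul : |deriv u r| * r ≤ C' * (1 + r) * Real.exp (-K * r ^ β) * (1 + r) :=
        mul_le_mul hVb (by linarith) hrpos.le (by positivity)
      calc |deriv u r / (β * r ^ (β - 1))| ≤ |deriv u r| * r / β := hwb
      _ ≤ C' * (1 + r) * Real.exp (-K * r ^ β) * (1 + r) / β := by
          exact (div_le_div_iff_of_pos_right hβ0).2 hmul
      _ = (C' / β) * (1 + r) ^ 2 * Real.exp (-K * r ^ β) := by ring
    have hU2 : (u r) ^ 2 ≤ CK' ^ 2 * Real.exp (-K * r ^ β) ^ 2 := by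
      have h8 := hdecayK r hrIoi
      nlinarith [abs_nonneg (u r), sq_abs (u r)]
    have hw2 : (deriv u r / (β * r ^ (β - 1))) ^ 2 ≤
        (C' / β) ^ 2 * (1 + r) ^ 4 * Real.exp (-K * r ^ β) ^ 2 := by
      nlinarith [hwfull, abs_nonneg (deriv u r / (β * r ^ (β - 1))),
        sq_abs (deriv u r / (β * r ^ (β - 1)))]
    have hone : (1:ℝ) ≤ (1 + r) ^ 4 := by
      nlinarith [sq_nonneg r, mul_nonneg (mul_nonneg hrpos.le hrpos.le) hrpos.le,
        mul_nonneg (mul_nonneg (mul_nonneg hrpos.le hrpos.le) hrpos.le) hrpos.le]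
    have hEub : (u r) ^ 2 + (deriv u r / (β * r ^ (β - 1))) ^ 2 ≤
        M * (1 + r) ^ 4 * Real.exp (-K * r ^ β) ^ 2 := by
      have h9 : CK' ^ 2 * Real.exp (-K * r ^ β) ^ 2 * 1 ≤
          CK' ^ 2 * Real.exp (-K * r ^ β) ^ 2 * (1 + r) ^ 4 :=
        mul_le_mul_of_nonneg_left hone (by positivity)
      rw [hMdef]
      linarith only [hU2, hw2, h9]
    have h10 := mul_le_mul_of_nonneg_right hEub (Real.exp_pos (K * r ^ β)).le
    have hexpid : Real.exp (-K * r ^ β) ^ 2 * Real.exp (K * r ^ β) = Real.exp (-K * r ^ β) := by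
      rw [sq, ← Real.exp_add, ← Real.exp_add]
      congr 1
      ring
    rw [hFdef]
    calc ((u r) ^ 2 + (deriv u r / (β * r ^ (β - 1))) ^ 2) * Real.exp (K * r ^ β) ≤
        M * (1 + r) ^ 4 * Real.exp (-K * r ^ β) ^ 2 * Real.exp (K * r ^ β) := h10
    _ = M * (1 + r) ^ 4 * (Real.exp (-K * r ^ β) ^ 2 * Real.exp (K * r ^ β)) := by ring
    _ = M * (1 + r) ^ 4 * Real.exp (-K * r ^ β) := by rw [hexpid]
  -- the bound tends to zero
  have hlim : Tendsto (fun r : ℝ => M * (1 + r) ^ 4 * Real.exp (-K * r ^ β)) atTop (𝓝 0) := by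
    have l1 : Tendsto (fun y : ℝ => 16 * M * (y ^ ((4:ℝ) / β) * Real.exp (-K * y)))
        atTop (𝓝 0) := by
      have := (tendsto_rpow_mul_exp_neg_mul_atTop_nhds_zero ((4:ℝ) / β) K hKpos).const_mul
        (16 * M)
      simpa using this
    have l3 := l1.comp (tendsto_rpow_atTop hβ0)
    apply tendsto_of_tendsto_of_tendsto_of_le_of_le' tendsto_const_nhds l3
    · filter_upwards [eventually_ge_atTop (1:ℝ)] with r hr1
      positivity
    · filter_upwards [eventually_ge_atTop (1:ℝ)] with r hr1
      have hrpos : (0:ℝ) < r := by linarith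
      have hid : ((r:ℝ) ^ β) ^ ((4:ℝ) / β) = r ^ (4:ℕ) := by
        rw [← Real.rpow_natCast r 4, ← Real.rpow_mul hrpos.le]
        congr 1
        push_cast
        field_simp
      show M * (1 + r) ^ 4 * Real.exp (-K * r ^ β) ≤
        16 * M * ((r ^ β) ^ ((4:ℝ) / β) * Real.exp (-K * r ^ β))
      rw [hid]
      have h14 : (1 + r) ^ 4 ≤ 16 * r ^ 4 := by
        have h15 := pow_le_pow_left₀ (show (0:ℝ) ≤ 1 + r by linarith)
          (show (1:ℝ) + r ≤ 2 * r by linarith) 4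
        nlinarith [h15]
      have h16 := mul_le_mul_of_nonneg_right (mul_le_mul_of_nonneg_left h14 hM0)
        (Real.exp_nonneg (-K * r ^ β))
      linarith only [h16]
  -- conclude
  obtain ⟨r, hrlt, hrge⟩ :=
    ((hlim.eventually_lt_const hFrs).and (eventually_ge_atTop (max (max 2 (r0 + 2)) rs))).exists
  have hrsr : rs ≤ r := le_trans (le_max_right _ _) hrge
  have h15 : F rs ≤ F r := hmono (mem_Ici.2 (le_refl rs)) (mem_Ici.2 hrsr) hrsr
  have h16 := hub r hrge
  linarith only [h15, h16, hrlt]
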